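/- Assume Assumption A2 holds for κ, and let E ⊆ ℝ×ℝ^d be a union of a finite collection {Q'} of sets from the family {Q_δ(t,x) : (t,x) ∈ ℝ^{1+d}, δ > 0}. Then, with c = 1/(K₀^d l(K₀)) > 0, where K₀ is the engulfing constant from Assumption A2, there is a pairwise disjoint subcollection Q¹ = Q_{δ₁}(t₁,x₁), …, Q^m = Q_{δ_m}(t_m,x_m) of {Q'} such that Σ_{k=1}^m |Q^k| ≥ c|E|. -/

import Mathlib

open MeasureTheory Filter
open scoped ENNReal

noncomputable section

abbrev Rd (d : ℕ) := EuclideanSpace ℝ (Fin d)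

/-- The "parabolic cylinder" `Q_δ(t,x) = (t − κ(δ), t + κ(δ)) × B_δ(x)`. -/
def Qset (d : ℕ) (κ : ℝ → ℝ) (δ t : ℝ) (x : Rd d) : Set (ℝ × Rd d) :=
  Set.Ioo (t - κ δ) (t + κ δ) ×ˢ Metric.ball x δ

/-- Assumption A1: `κ` is continuous, vanishing at `0` and tending to `∞`. -/
def A1prop (κ : ℝ → ℝ) : Prop :=
  (∀ r > 0, 0 < κ r) ∧ ContinuousOn κ (Set.Ioi 0) ∧
  Tendsto κ (nhdsWithin 0 (Set.Ioi 0)) (nhds 0) ∧ Tendsto κ atTop atTop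

/-- Assumption A2: `κ(εr) ≤ l(ε)κ(r)` for a nondecreasing continuous `l` with
`l(0+) = 0`. -/
def A2prop (κ l : ℝ → ℝ) : Prop :=
  (∀ r > 0, 0 < κ r) ∧ MonotoneOn l (Set.Ioi 0) ∧ ContinuousOn l (Set.Ioi 0) ∧
  Tendsto l (nhdsWithin 0 (Set.Ioi 0)) (nhds 0) ∧
  ∀ ε > 0, ∀ r > 0, κ (ε * r) ≤ l ε * κ r

lemma vitali_aux (d : ℕ) (κ : ℝ → ℝ) (K0 : ℝ)
    {ι : Type} (δ t : ι → ℝ) (x : ι → Rd d)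
    (hκ : ∀ r > 0, 0 < κ r)
    (heng : ∀ δ₁ δ₂ t₁ t₂ : ℝ, ∀ x₁ x₂ : Rd d, 0 < δ₂ → δ₂ ≤ δ₁ →
      (Qset d κ δ₁ t₁ x₁ ∩ Qset d κ δ₂ t₂ x₂).Nonempty →
      Qset d κ δ₁ t₁ x₁ ∪ Qset d κ δ₂ t₂ x₂ ⊆ Qset d κ (K0 * δ₁) t₁ x₁) :
    ∀ n : ℕ, ∀ s : Finset ι, s.card ≤ n → (∀ i ∈ s, 0 < δ i) →
    ∃ m : Finset ι, m ⊆ s ∧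
      (↑m : Set ι).Pairwise (fun i j =>
        Disjoint (Qset d κ (δ i) (t i) (x i)) (Qset d κ (δ j) (t j) (x j))) ∧
      (⋃ i ∈ s, Qset d κ (δ i) (t i) (x i)) ⊆
        ⋃ j ∈ m, Qset d κ (K0 * δ j) (t j) (x j) := by
  intro n
  induction n with
  | zero =>
    intro s hs _
    have : s = ∅ := Finset.card_eq_zero.mp (Nat.le_zero.mp hs)
    subst this
    exact ⟨∅, by simp, by simp, by simp⟩
  | succ n ih =>
    intro s hs hδ
    rcases s.eq_empty_or_nonempty with rfl | hne
    · exact ⟨∅, by simp, by simp, by simp⟩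
    obtain ⟨i, hi, hmax⟩ := s.exists_max_image δ hne
    have hQne : ∀ j ∈ s, (Qset d κ (δ j) (t j) (x j)).Nonempty := by
      intro j hj
      refine ⟨(t j, x j), ?_, ?_⟩
      · constructor
        · have := hκ _ (hδ j hj); linarith
        · have := hκ _ (hδ j hj); linarith
      · exact Metric.mem_ball_self (hδ j hj)
    classical
    set s' := s.filter (fun j =>
      Disjoint (Qset d κ (δ j) (t j) (x j)) (Qset d κ (δ i) (t i) (x i))) with hs'
    have hs'sub : s' ⊆ s := Finset.filter_subset _ _
    have hi' : i ∉ s' := by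
      intro hmem
      have hd := (Finset.mem_filter.mp hmem).2
      rw [disjoint_self] at hd
      exact (hQne i hi).ne_empty hd
    have hcard : s'.card ≤ n := by
      have : s' ⊂ s := ⟨hs'sub, fun hsub => hi' (hsub hi)⟩
      have := Finset.card_lt_card this
      omega
    obtain ⟨m', hm'sub, hpw, hcov⟩ := ih s' hcard (fun j hj => hδ j (hs'sub hj))
    refine ⟨insert i m', ?_, ?_, ?_⟩
    · exact Finset.insert_subset hi (hm'sub.trans hs'sub)
    · rw [Finset.coe_insert]
      haveI : Std.Symm (fun i j => Disjoint (Qset d κ (δ i) (t i) (x i))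
          (Qset d κ (δ j) (t j) (x j))) := ⟨fun a b hab => hab.symm⟩
      refine Set.pairwise_insert_of_symm |>.mpr ⟨hpw, ?_⟩
      intro j hj _
      have hj' : j ∈ s' := hm'sub hj
      exact ((Finset.mem_filter.mp hj').2).symm
    · intro y hy
      simp only [Set.mem_iUnion] at hy ⊢
      obtain ⟨j, hj, hyj⟩ := hy
      by_cases hd : Disjoint (Qset d κ (δ j) (t j) (x j)) (Qset d κ (δ i) (t i) (x i))
      · have hj' : j ∈ s' := Finset.mem_filter.mpr ⟨hj, hd⟩
        have : y ∈ ⋃ k ∈ s', Qset d κ (δ k) (t k) (x k) := by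
          simp only [Set.mem_iUnion]; exact ⟨j, hj', hyj⟩
        have := hcov this
        simp only [Set.mem_iUnion] at this
        obtain ⟨k, hk, hyk⟩ := this
        exact ⟨k, Finset.mem_insert_of_mem hk, hyk⟩
      · have hne' : (Qset d κ (δ i) (t i) (x i) ∩
            Qset d κ (δ j) (t j) (x j)).Nonempty := by
          rw [Set.not_disjoint_iff_nonempty_inter] at hd
          exact ⟨hd.some, hd.some_mem.2, hd.some_mem.1⟩
        have hsub := heng (δ i) (δ j) (t i) (t j) (x i) (x j)
          (hδ j hj) (hmax j hj) hne'
        exact ⟨i, Finset.mem_insert_self i m', hsub (Or.inr hyj)⟩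

/-- Vitali covering lemma for the family `𝒬`. -/
theorem statement_17 (d : ℕ) (κ l : ℝ → ℝ) (h : A2prop κ l)
    (K0 : ℝ) (hK0 : 3 ≤ K0)
    (heng : ∀ δ δ' t r : ℝ, ∀ x z : Rd d, 0 < δ' → δ' ≤ δ →
      (Qset d κ δ t x ∩ Qset d κ δ' r z).Nonempty →
      Qset d κ δ t x ∪ Qset d κ δ' r z ⊆ Qset d κ (K0 * δ) t x ∧
      volume (Qset d κ (K0 * δ) t x)
        ≤ ENNReal.ofReal (K0 ^ d * l K0) * volume (Qset d κ δ t x))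
    {ι : Type} (s : Finset ι) (δ : ι → ℝ) (t : ι → ℝ) (x : ι → Rd d)
    (hδ : ∀ i ∈ s, 0 < δ i) :
    ∃ m : Finset ι, m ⊆ s ∧
      (↑m : Set ι).Pairwise (fun i j =>
        Disjoint (Qset d κ (δ i) (t i) (x i)) (Qset d κ (δ j) (t j) (x j))) ∧
      ENNReal.ofReal (1 / (K0 ^ d * l K0))
          * volume (⋃ i ∈ s, Qset d κ (δ i) (t i) (x i))
        ≤ ∑ i ∈ m, volume (Qset d κ (δ i) (t i) (x i)) := by
  have hκpos := h.1
  have hK0pos : (0:ℝ) < K0 := by linarith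
  have hlpos : 0 < l K0 := by
    have h1 := h.2.2.2.2 K0 hK0pos 1 one_pos
    have h2 := hκpos (K0 * 1) (by nlinarith)
    have h3 := hκpos 1 one_pos
    nlinarith
  have hCpos : (0:ℝ) < K0 ^ d * l K0 := by positivity
  obtain ⟨m, hmsub, hpw, hcov⟩ := vitali_aux d κ K0 δ t x hκpos
    (fun δ₁ δ₂ t₁ t₂ x₁ x₂ h1 h2 h3 => (heng δ₁ δ₂ t₁ t₂ x₁ x₂ h1 h2 h3).1)
    s.card s le_rfl hδ
  refine ⟨m, hmsub, hpw, ?_⟩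
  have hQne : ∀ j ∈ m, (Qset d κ (δ j) (t j) (x j)).Nonempty := by
    intro j hj
    refine ⟨(t j, x j), ?_, ?_⟩
    · constructor
      · have := hκpos _ (hδ j (hmsub hj)); linarith
      · have := hκpos _ (hδ j (hmsub hj)); linarith
    · exact Metric.mem_ball_self (hδ j (hmsub hj))
  have hvol : ∀ j ∈ m, volume (Qset d κ (K0 * δ j) (t j) (x j))
      ≤ ENNReal.ofReal (K0 ^ d * l K0) * volume (Qset d κ (δ j) (t j) (x j)) := by
    intro j hj
    refine (heng (δ j) (δ j) (t j) (t j) (x j) (x j)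
      (hδ j (hmsub hj)) le_rfl ?_).2
    rw [Set.inter_self]; exact hQne j hj
  have h1 : volume (⋃ i ∈ s, Qset d κ (δ i) (t i) (x i))
      ≤ ∑ j ∈ m, volume (Qset d κ (K0 * δ j) (t j) (x j)) :=
    (measure_mono hcov).trans (measure_biUnion_finset_le m _)
  have h2 : ∑ j ∈ m, volume (Qset d κ (K0 * δ j) (t j) (x j))
      ≤ ENNReal.ofReal (K0 ^ d * l K0)
        * ∑ j ∈ m, volume (Qset d κ (δ j) (t j) (x j)) := by
    rw [Finset.mul_sum]
    exact Finset.sum_le_sum hvol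
  calc ENNReal.ofReal (1 / (K0 ^ d * l K0))
          * volume (⋃ i ∈ s, Qset d κ (δ i) (t i) (x i))
      ≤ ENNReal.ofReal (1 / (K0 ^ d * l K0))
          * (ENNReal.ofReal (K0 ^ d * l K0)
            * ∑ j ∈ m, volume (Qset d κ (δ j) (t j) (x j))) :=
        mul_le_mul_right (h1.trans h2) _
    _ = (ENNReal.ofReal (1 / (K0 ^ d * l K0)) * ENNReal.ofReal (K0 ^ d * l K0))
          * ∑ j ∈ m, volume (Qset d κ (δ j) (t j) (x j)) := by ring
    _ = ∑ j ∈ m, volume (Qset d κ (δ j) (t j) (x j)) := by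
        rw [← ENNReal.ofReal_mul (by positivity), one_div,
          inv_mul_cancel₀ hCpos.ne', ENNReal.ofReal_one, one_mul]
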